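/- arXiv:1309.2367 — 3 statements merged into one kernel-verified Lean document; each statement's English description precedes it below -/
import Mathlib

section
/- Let R be a Krull domain and 0 → L → M → N an exact sequence of R-lattices. Then 0 → L** → M** → N** is also exact, where (−)** denotes the double dual Hom_R(Hom_R(−,R),R). -/
open TensorProduct

universe u

def IsHeightOnePrime {R : Type u} [CommRing R] (P : Ideal R) : Prop :=
  P.IsPrime ∧ (∃ Q : Ideal R, Q.IsPrime ∧ Q < P) ∧
    ∀ Q₁ Q₂ : Ideal R, Q₁.IsPrime → Q₂.IsPrime → Q₁ < Q₂ → ¬ Q₂ < P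

def IsKrullDomain (R : Type u) [CommRing R] [IsDomain R] : Prop :=
  (∀ (P : Ideal R) [P.IsPrime], IsHeightOnePrime P →
    IsDiscreteValuationRing (Localization.AtPrime P)) ∧
  (∀ x : FractionRing R,
    (∀ P : Ideal R, IsHeightOnePrime P →
      ∃ a s : R, s ∉ P ∧ x * algebraMap R (FractionRing R) s = algebraMap R (FractionRing R) a) →
    ∃ r : R, algebraMap R (FractionRing R) r = x) ∧
  (∀ r : R, r ≠ 0 → {P : Ideal R | IsHeightOnePrime P ∧ r ∈ P}.Finite)

def IsLattice (R : Type u) (M : Type u) [CommRing R] [AddCommGroup M] [Module R M] : Prop :=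
  (∀ (a : R) (m : M), a • m = 0 → a = 0 ∨ m = 0) ∧
  ∃ (P : Type u) (_ : AddCommGroup P) (_ : Module R P) (_ : Module.Finite R P)
    (f : M →ₗ[R] P), Function.Injective f

section Aux

variable {R : Type u} [CommRing R] [IsDomain R]

local notation "K" => FractionRing R
local notation "алг" => algebraMap R (FractionRing R)

lemma baer_fraction : Module.Baer R (FractionRing R) := by
  intro I g
  by_cases hI : I = ⊥
  · subst hI
    refine ⟨0, fun x hx => ?_⟩
    have hx0 : (⟨x, hx⟩ : (⊥ : Ideal R)) = 0 := Subtype.ext (by simpa using hx)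
    rw [hx0, map_zero]
    simp
  · obtain ⟨a, haI, ha0⟩ := Submodule.exists_mem_ne_zero_of_ne_bot hI
    refine ⟨(((алг a)⁻¹ * g ⟨a, haI⟩) • (Algebra.linearMap R (FractionRing R))), fun x hx => ?_⟩
    have key : (алг x) * g ⟨a, haI⟩ = (алг a) * g ⟨x, hx⟩ := by
      have h1 : x • g ⟨a, haI⟩ = g (x • ⟨a, haI⟩) := (map_smul g x _).symm
      have h2 : a • g ⟨x, hx⟩ = g (a • ⟨x, hx⟩) := (map_smul g a _).symm
      have h3 : (x • (⟨a, haI⟩ : I)) = a • (⟨x, hx⟩ : I) := by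
        ext
        simp [mul_comm]
      rw [Algebra.smul_def] at h1 h2
      rw [h1, h2, h3]
    have hane : алг a ≠ 0 := by
      simpa using fun h => ha0 (IsFractionRing.injective R (FractionRing R) (by simp [h]))
    simp only [LinearMap.smul_apply, Algebra.linearMap_apply, smul_eq_mul]
    field_simp
    rw [mul_comm (g ⟨a, haI⟩), key]

lemma injective_fraction : Module.Injective R (FractionRing R) :=
  (baer_fraction).injective

/-- descend a `K`-valued linear map with values in `R` to an `R`-valued one -/
lemma exists_desc {M : Type u} [AddCommGroup M] [Module R M] (lam : M →ₗ[R] FractionRing R)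
    (h : ∀ m, ∃ r : R, алг r = lam m) :
    ∃ χ : M →ₗ[R] R, ∀ m, алг (χ m) = lam m := by
  have inj : Function.Injective (алг) := IsFractionRing.injective R (FractionRing R)
  choose c hc using h
  refine ⟨⟨⟨fun m => c m, fun m m' => ?_⟩, fun r m => ?_⟩, fun m => hc m⟩
  · apply inj
    rw [map_add, hc, hc, hc, map_add]
  · apply inj
    simp only [RingHom.id_apply, smul_eq_mul, map_mul]
    rw [hc, map_smul, ← hc, Algebra.smul_def]

/-- Lemma (A): uniform denominator for a `K`-valued functional on a lattice. -/
lemma exists_den {M : Type u} [AddCommGroup M] [Module R M] (hM : IsLattice R M)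
    (lam : M →ₗ[R] FractionRing R) :
    ∃ d : R, d ≠ 0 ∧ ∀ m, ∃ r : R, алг d * lam m = алг r := by
  classical
  obtain ⟨-, W, _, _, _, ι, hι⟩ := hM
  obtain ⟨lam', hlam'⟩ := injective_fraction.out ι hι lam
  -- generators of W
  obtain ⟨s, hs⟩ := Module.Finite.fg_top (R := R) (M := W)
  -- for each x : W pick a fraction representation of lam' x
  have hrep : ∀ x : W, ∃ (a b : R), b ≠ 0 ∧ алг b * lam' x = алг a := by
    intro x
    obtain ⟨⟨a, b⟩, hab⟩ := IsLocalization.mk'_surjective (nonZeroDivisors R) (lam' x)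
    refine ⟨a, b, nonZeroDivisors.coe_ne_zero b, ?_⟩
    rw [← hab, mul_comm, IsLocalization.mk'_spec]
  choose num den hden hnd using hrep
  refine ⟨∏ x ∈ s, den x, ?_, ?_⟩
  · rw [Finset.prod_ne_zero_iff]
    exact fun x _ => hden x
  · set d := ∏ x ∈ s, den x with hd
    set T : Submodule R W :=
      { carrier := {w | ∃ r : R, алг d * lam' w = алг r}
        add_mem' := by
          intro a b ha hb
          obtain ⟨r, hr⟩ := ha
          obtain ⟨r', hr'⟩ := hb
          exact ⟨r + r', by rw [map_add, mul_add, hr, hr', ← map_add]⟩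
        zero_mem' := ⟨0, by simp⟩
        smul_mem' := by
          intro cc w hw
          obtain ⟨r, hr⟩ := hw
          refine ⟨cc * r, ?_⟩
          rw [map_smul, Algebra.smul_def, map_mul, ← mul_assoc,
            mul_comm (алг d) (алг cc), mul_assoc, hr] } with hT
    have hsub : (s : Set W) ⊆ T := by
      intro x hx
      have hd' : d = den x * ∏ y ∈ s.erase x, den y := (Finset.mul_prod_erase s den hx).symm
      refine ⟨(∏ y ∈ s.erase x, den y) * num x, ?_⟩
      rw [hd', map_mul, mul_comm (алг (den x)), mul_assoc, hnd x, ← map_mul]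
    have htop : Submodule.span R (s : Set W) ≤ T := Submodule.span_le.mpr hsub
    rw [hs] at htop
    intro m
    obtain ⟨r, hr⟩ := htop (Submodule.mem_top (x := ι m))
    exact ⟨r, by rw [← hlam' m] at *; exact hr⟩

/-- extension of a functional along an injective map, with a denominator -/
lemma exists_pair {L M : Type u} [AddCommGroup L] [Module R L] [AddCommGroup M] [Module R M]
    (hM : IsLattice R M) (f : L →ₗ[R] M) (hf : Function.Injective f) (φ : L →ₗ[R] R) :
    ∃ (d : R) (ψ : M →ₗ[R] R), d ≠ 0 ∧ ψ.comp f = d • φ := by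
  obtain ⟨lam, hlam⟩ := injective_fraction.out f hf ((Algebra.linearMap R (FractionRing R)).comp φ)
  obtain ⟨d, hd0, hd⟩ := exists_den hM lam
  obtain ⟨ψ, hψ⟩ := exists_desc (d • lam) (by
    intro m
    obtain ⟨r, hr⟩ := hd m
    exact ⟨r, by rw [LinearMap.smul_apply, Algebra.smul_def, hr]⟩)
  refine ⟨d, ψ, hd0, ?_⟩
  apply LinearMap.ext
  intro l
  apply IsFractionRing.injective R (FractionRing R)
  have h1 : алг (ψ (f l)) = алг d * lam (f l) := by
    rw [hψ (f l), LinearMap.smul_apply, Algebra.smul_def]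
  rw [LinearMap.comp_apply, h1, hlam l, LinearMap.comp_apply, Algebra.linearMap_apply,
    LinearMap.smul_apply, smul_eq_mul, map_mul]

/-- Key vanishing lemma: a double-dual functional killing `range g.dualMap` kills every
functional vanishing on `ker g`. -/
lemma vanish {M N : Type u} [AddCommGroup M] [Module R M] [AddCommGroup N] [Module R N]
    (hN : IsLattice R N) (g : M →ₗ[R] N)
    (Φ : Module.Dual R (Module.Dual R M))
    (hΦ : ∀ χ : Module.Dual R N, Φ (g.dualMap χ) = 0)
    (ψ : Module.Dual R M) (hψ : LinearMap.ker g ≤ LinearMap.ker ψ) : Φ ψ = 0 := by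
  -- ψ factors through the range of g, with values in K after extension
  let ψbar : (M ⧸ LinearMap.ker g) →ₗ[R] R := Submodule.liftQ (LinearMap.ker g) ψ hψ
  let ν : LinearMap.range g →ₗ[R] FractionRing R :=
    (Algebra.linearMap R (FractionRing R)) ∘ₗ ψbar ∘ₗ (g.quotKerEquivRange.symm : LinearMap.range g →ₗ[R] M ⧸ LinearMap.ker g)
  obtain ⟨lam, hlam⟩ := injective_fraction.out (LinearMap.range g).subtype
    (Submodule.injective_subtype _) ν
  have hlamg : ∀ m : M, lam (g m) = алг (ψ m) := by
    intro m
    have h0 : ((⟨g m, LinearMap.mem_range_self g m⟩ : LinearMap.range g) : N) = g m := rfl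
    have h1 : lam (g m) = ν ⟨g m, LinearMap.mem_range_self g m⟩ :=
      hlam ⟨g m, LinearMap.mem_range_self g m⟩
    rw [h1]
    have h2 : g.quotKerEquivRange (Submodule.Quotient.mk m) = ⟨g m, LinearMap.mem_range_self g m⟩ := by
      apply Subtype.ext
      exact g.quotKerEquivRange_apply_mk m
    have h3 : g.quotKerEquivRange.symm ⟨g m, LinearMap.mem_range_self g m⟩
        = Submodule.Quotient.mk m := by rw [← h2, LinearEquiv.symm_apply_apply]
    show алг (ψbar (g.quotKerEquivRange.symm ⟨g m, LinearMap.mem_range_self g m⟩)) = алг (ψ m)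
    rw [h3]
    congr 1
  obtain ⟨b, hb0, hb⟩ := exists_den hN lam
  obtain ⟨χ, hχ⟩ := exists_desc (b • lam) (by
    intro n
    obtain ⟨r, hr⟩ := hb n
    exact ⟨r, by rw [LinearMap.smul_apply, Algebra.smul_def, hr]⟩)
  have hkey : χ.comp g = b • ψ := by
    apply LinearMap.ext
    intro m
    apply IsFractionRing.injective R (FractionRing R)
    rw [LinearMap.comp_apply, hχ (g m), LinearMap.smul_apply, Algebra.smul_def, hlamg m,
      LinearMap.smul_apply, smul_eq_mul, map_mul]
  have h4 : Φ (χ.comp g) = 0 := hΦ χ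
  rw [hkey, map_smul, smul_eq_mul] at h4
  exact (mul_eq_zero.mp h4).resolve_left hb0

lemma h1_ne_bot {P : Ideal R} (hP : IsHeightOnePrime P) : P ≠ ⊥ := by
  obtain ⟨-, ⟨Q', -, hQ'⟩, -⟩ := hP
  intro h
  rw [h] at hQ'
  exact (not_lt_bot hQ')

lemma h1_not_le {P Q : Ideal R} (hP : IsHeightOnePrime P) (hQ : IsHeightOnePrime Q)
    (hne : P ≠ Q) : ¬ P ≤ Q := by
  intro hle
  have hlt : P < Q := lt_of_le_of_ne hle hne
  exact hQ.2.2 ⊥ P Ideal.bot_prime hP.1 (Ne.bot_lt (h1_ne_bot hP)) hlt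

/-- In the local ring at a height-one prime `P`, a power of any element of `P`
is divisible by `d` (up to harmless denominators). -/
lemma exists_pow_dvd (hR : IsKrullDomain R) {P : Ideal R} (hP : IsHeightOnePrime P)
    {d : R} (hd0 : d ≠ 0) {t : R} (ht : t ∈ P) :
    ∃ (n : ℕ) (a t' : R), t' ∉ P ∧ t ^ n * t' = d * a := by
  haveI hPp : P.IsPrime := hP.1
  haveI hdvr : IsDiscreteValuationRing (Localization.AtPrime P) := hR.1 P hP
  set AP := Localization.AtPrime P
  have hinj : Function.Injective (algebraMap R AP) :=
    IsLocalization.injective AP P.primeCompl_le_nonZeroDivisors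
  have hd' : algebraMap R AP d ≠ 0 := fun h => hd0 (hinj (by rw [h, map_zero]))
  obtain ⟨ϖ, hϖ⟩ := IsDiscreteValuationRing.exists_irreducible AP
  obtain ⟨n, u, hu⟩ := IsDiscreteValuationRing.eq_unit_mul_pow_irreducible hd' hϖ
  have htm : algebraMap R AP t ∈ IsLocalRing.maximalIdeal AP :=
    (IsLocalization.AtPrime.to_map_mem_maximal_iff AP P t).mpr ht
  rw [hϖ.maximalIdeal_eq, Ideal.mem_span_singleton'] at htm
  obtain ⟨c, hc⟩ := htm
  have hpow : algebraMap R AP (t ^ n) = (c ^ n * (↑u⁻¹ : AP)) * algebraMap R AP d := by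
    rw [map_pow, ← hc, mul_pow, hu]
    have hu1 : (↑u⁻¹ : AP) * ↑u = 1 := Units.inv_mul u
    linear_combination (-(c ^ n * ϖ ^ n)) * hu1
  obtain ⟨⟨a, t'⟩, ht'⟩ := IsLocalization.mk'_surjective P.primeCompl ((c ^ n * (↑u⁻¹ : AP)))
  refine ⟨n, a, t', t'.2, hinj ?_⟩
  rw [map_mul, map_mul, hpow, mul_assoc, mul_comm (algebraMap R AP d), ← mul_assoc, ← ht',
    IsLocalization.mk'_spec, mul_comm]

/-- The key local extension lemma: at a height-one prime `Q` (where the localization is a DVR),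
a functional on `L` extends to an `R_Q`-valued functional on `M`. -/
lemma exists_loc_extension
    {L M N W : Type u} [AddCommGroup L] [Module R L] [AddCommGroup M] [Module R M]
    [AddCommGroup N] [Module R N] [AddCommGroup W] [Module R W] [Module.Finite R W]
    (hNtf : ∀ (a : R) (n : N), a • n = 0 → a = 0 ∨ n = 0)
    (f : L →ₗ[R] M) (g : M →ₗ[R] N) (hf : Function.Injective f) (hfg : Function.Exact f g)
    (ι : M →ₗ[R] W) (hι : Function.Injective ι)
    {Q : Ideal R} [Q.IsPrime] [IsDiscreteValuationRing (Localization.AtPrime Q)]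
    (φ : L →ₗ[R] R) :
    ∃ lam : M →ₗ[R] FractionRing R,
      (∀ l, lam (f l) = алг (φ l)) ∧
      (∀ m, ∃ (a t : R), t ∉ Q ∧ lam m * алг t = алг a) := by
  classical
  set S := Q.primeCompl with hS
  haveI : IsDomain (Localization.AtPrime Q) :=
    IsLocalization.isDomain_of_local_atPrime ‹Q.IsPrime›
  set A := Localization.AtPrime Q with hA
  let fQ : LocalizedModule S L →ₗ[A] LocalizedModule S M := LocalizedModule.map S f
  let gQ : LocalizedModule S M →ₗ[A] LocalizedModule S N := LocalizedModule.map S g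
  let ιQ : LocalizedModule S M →ₗ[A] LocalizedModule S W := LocalizedModule.map S ι
  have hfQ : Function.Injective fQ := LocalizedModule.map_injective S f hf
  have hιQ : Function.Injective ιQ := LocalizedModule.map_injective S ι hι
  have hexact : Function.Exact fQ gQ := LocalizedModule.map_exact S f g hfg
  have hker : LinearMap.ker gQ = LinearMap.range fQ := LinearMap.exact_iff.mp hexact
  -- finiteness
  haveI : IsNoetherianRing A := PrincipalIdealRing.isNoetherianRing
  haveI : Module.Finite A (LocalizedModule S W) :=
    Module.Finite.of_isLocalizedModule S (LocalizedModule.mkLinearMap S W)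
  haveI : IsNoetherian A (LocalizedModule S W) :=
    isNoetherian_of_isNoetherianRing_of_finite A (LocalizedModule S W)
  haveI : Module.Finite A ↥(LinearMap.range ιQ) :=
    Module.Finite.iff_fg.mpr (IsNoetherian.noetherian _)
  haveI : Module.Finite A (LocalizedModule S M) :=
    Module.Finite.equiv (LinearEquiv.ofInjective ιQ hιQ).symm
  -- torsion-freeness of the localization of N
  haveI : NoZeroSMulDivisors A (LocalizedModule S N) := by
    refine ⟨fun {a} {x} hax => ?_⟩
    induction x using LocalizedModule.induction_on with
    | _ n u =>
      induction a using Localization.induction_on with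
      | _ p =>
        obtain ⟨r, t⟩ := p
        rw [LocalizedModule.mk_smul_mk] at hax
        rw [← LocalizedModule.zero_mk (1 : S), LocalizedModule.mk_eq] at hax
        obtain ⟨c, hc⟩ := hax
        simp only [one_smul, smul_zero, Submonoid.smul_def, smul_smul] at hc
        rcases hNtf ((c : R) * r) n hc with hcr | hn
        · left
          have hc0 : (c : R) ≠ 0 := fun h => (c.2 : (c : R) ∉ Q) (h ▸ Q.zero_mem)
          have hr0 : r = 0 := by
            rcases mul_eq_zero.mp hcr with h | h
            · exact absurd h hc0
            · exact h
          rw [hr0, Localization.mk_zero]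
        · right
          rw [hn, LocalizedModule.zero_mk]
  -- the quotient C is finite, torsion-free, hence free over the DVR A
  have hle : LinearMap.range fQ ≤ LinearMap.ker gQ := le_of_eq hker.symm
  let gbar : ((LocalizedModule S M) ⧸ (LinearMap.range fQ)) →ₗ[A] LocalizedModule S N :=
    Submodule.liftQ _ gQ hle
  have hgbar : Function.Injective gbar :=
    LinearMap.ker_eq_bot.mp (Submodule.ker_liftQ_eq_bot' _ _ hker.symm)
  haveI : NoZeroSMulDivisors A ((LocalizedModule S M) ⧸ (LinearMap.range fQ)) := by
    refine ⟨fun {a} {x} hax => ?_⟩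
    have : gbar (a • x) = 0 := by rw [hax, map_zero]
    rw [map_smul] at this
    rcases eq_zero_or_eq_zero_of_smul_eq_zero this with h | h
    · exact Or.inl h
    · exact Or.inr (hgbar (by rw [h, map_zero]))
  haveI : Module.Free A ((LocalizedModule S M) ⧸ (LinearMap.range fQ)) :=
    Module.free_of_finite_type_torsion_free'
  -- splitting
  obtain ⟨σ, hσ⟩ := Module.projective_lifting_property ((LinearMap.range fQ).mkQ)
    (LinearMap.id) (Submodule.mkQ_surjective _)
  let h : LocalizedModule S M →ₗ[A] LocalizedModule S M :=
    LinearMap.id - σ ∘ₗ (LinearMap.range fQ).mkQ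
  have hhmem : ∀ x, h x ∈ LinearMap.range fQ := by
    intro x
    have h0 : (LinearMap.range fQ).mkQ (h x) = 0 := by
      have h1 : (LinearMap.range fQ).mkQ (σ ((LinearMap.range fQ).mkQ x))
          = (LinearMap.range fQ).mkQ x := by
        have := LinearMap.congr_fun hσ ((LinearMap.range fQ).mkQ x)
        simpa using this
      have hx : h x = x - σ ((LinearMap.range fQ).mkQ x) := rfl
      rw [hx, map_sub, h1, sub_self]
    rwa [← Submodule.Quotient.mk_eq_zero, ← Submodule.mkQ_apply]
  let e : LocalizedModule S L ≃ₗ[A] ↥(LinearMap.range fQ) := LinearEquiv.ofInjective fQ hfQ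
  let rr : LocalizedModule S M →ₗ[A] LocalizedModule S L :=
    (e.symm : ↥(LinearMap.range fQ) →ₗ[A] LocalizedModule S L) ∘ₗ
      (h.codRestrict (LinearMap.range fQ) hhmem)
  have hrr : ∀ y, rr (fQ y) = y := by
    intro y
    have h1 : h (fQ y) = fQ y := by
      have h0 : (LinearMap.range fQ).mkQ (fQ y) = 0 := by
        rw [Submodule.mkQ_apply, Submodule.Quotient.mk_eq_zero]
        exact ⟨y, rfl⟩
      have hx : h (fQ y) = fQ y - σ ((LinearMap.range fQ).mkQ (fQ y)) := rfl
      rw [hx, h0, map_zero, sub_zero]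
    have h2 : (h.codRestrict (LinearMap.range fQ) hhmem) (fQ y) = e y := by
      apply Subtype.ext
      rw [LinearMap.codRestrict_apply, h1]
      exact (LinearEquiv.ofInjective_apply fQ y).symm
    show e.symm ((h.codRestrict (LinearMap.range fQ) hhmem) (fQ y)) = y
    rw [h2, LinearEquiv.symm_apply_apply]
  -- the K-valued lift on L_Q
  have hu : ∀ (u : S), IsUnit ((algebraMap R (Module.End R (FractionRing R))) (u : R)) := by
    intro u
    have hne : алг (u : R) ≠ 0 := by
      intro hh
      have : (u : R) = 0 := IsFractionRing.injective R (FractionRing R) (by rw [hh, map_zero])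
      exact (u.2 : (u : R) ∉ Q) (this ▸ Q.zero_mem)
    rw [Module.End.isUnit_iff]
    constructor
    · intro x y hxy
      simp only [Module.algebraMap_end_apply, Algebra.smul_def] at hxy
      exact mul_left_cancel₀ hne hxy
    · intro y
      refine ⟨(алг (u : R))⁻¹ * y, ?_⟩
      simp only [Module.algebraMap_end_apply, Algebra.smul_def]
      field_simp
  let τ : LocalizedModule S L →ₗ[R] FractionRing R :=
    LocalizedModule.lift S ((Algebra.linearMap R (FractionRing R)) ∘ₗ φ) hu
  have hτ1 : ∀ l, τ (LocalizedModule.mk l 1) = алг (φ l) := by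
    intro l
    have := LinearMap.congr_fun
      (LocalizedModule.lift_comp S ((Algebra.linearMap R (FractionRing R)) ∘ₗ φ) hu) l
    exact this
  have hτ2 : ∀ y : LocalizedModule S L, ∃ (a t : R), t ∉ Q ∧ τ y * алг t = алг a := by
    intro y
    induction y using LocalizedModule.induction_on with
    | _ l u =>
      refine ⟨φ l, u, u.2, ?_⟩
      have hcan : (u : R) • LocalizedModule.mk l u = LocalizedModule.mk l 1 := by
        rw [LocalizedModule.smul'_mk]
        have : ((u : R) • l) = u • l := (Submonoid.smul_def u l).symm
        rw [this, show LocalizedModule.mk (u • l) u = LocalizedModule.mk (u • l) (u * 1) by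
          rw [mul_one]]
        exact LocalizedModule.mk_cancel_common_left u 1 l
      calc τ (LocalizedModule.mk l u) * алг u
          = алг u * τ (LocalizedModule.mk l u) := mul_comm _ _
        _ = (u : R) • τ (LocalizedModule.mk l u) := (Algebra.smul_def _ _).symm
        _ = τ ((u : R) • LocalizedModule.mk l u) := (map_smul τ _ _).symm
        _ = τ (LocalizedModule.mk l 1) := by rw [hcan]
        _ = алг (φ l) := hτ1 l
  -- assemble
  refine ⟨τ ∘ₗ (rr.restrictScalars R) ∘ₗ (LocalizedModule.mkLinearMap S M), ?_, ?_⟩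
  · intro l
    have hmap : LocalizedModule.mk (f l) (1 : S) = fQ (LocalizedModule.mk l 1) :=
      (LocalizedModule.map_mk S f l 1).symm
    show τ (rr (LocalizedModule.mkLinearMap S M (f l))) = алг (φ l)
    rw [LocalizedModule.mkLinearMap_apply, hmap, hrr]
    exact hτ1 l
  · intro m
    exact hτ2 (rr (LocalizedModule.mkLinearMap S M m))

/-- The crucial lemma (★): a functional on `L` extends to `M` after multiplication by a
scalar avoiding any given height-one prime `Q`. -/
lemma exists_pair_avoiding (hR : IsKrullDomain R)
    {L M N : Type u} [AddCommGroup L] [Module R L] [AddCommGroup M] [Module R M]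
    [AddCommGroup N] [Module R N]
    (hM : IsLattice R M) (hN : IsLattice R N)
    (f : L →ₗ[R] M) (g : M →ₗ[R] N) (hf : Function.Injective f) (hfg : Function.Exact f g)
    (φ : L →ₗ[R] R) {Q : Ideal R} (hQ : IsHeightOnePrime Q) :
    ∃ (s : R) (ψ : M →ₗ[R] R), s ∉ Q ∧ ψ.comp f = s • φ := by
  classical
  haveI : Q.IsPrime := hQ.1
  haveI : IsDiscreteValuationRing (Localization.AtPrime Q) := hR.1 Q hQ
  obtain ⟨hMtf, W, _, _, _, ι, hι⟩ := hM
  obtain ⟨lam, hlam1, hlam2⟩ := exists_loc_extension (Q := Q) hN.1 f g hf hfg ι hι φ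
  obtain ⟨d, hd0, hd⟩ := exists_den ⟨hMtf, W, ‹_›, ‹_›, ‹_›, ι, hι⟩ lam
  have hfin := hR.2.2 d hd0
  set B : Finset (Ideal R) := hfin.toFinset.erase Q with hB
  have hch : ∀ P ∈ B, ∃ (t : R) (n : ℕ) (a t' : R),
      (t ∈ P ∧ t ∉ Q) ∧ t' ∉ P ∧ t ^ n * t' = d * a := by
    intro P hP
    have hPQ : P ≠ Q := (Finset.mem_erase.mp hP).1
    have hP' : IsHeightOnePrime P ∧ d ∈ P :=
      hfin.mem_toFinset.mp (Finset.mem_erase.mp hP).2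
    obtain ⟨tt, htP, htQ⟩ := SetLike.not_le_iff_exists.mp (h1_not_le hP'.1 hQ hPQ)
    obtain ⟨n, a, t', ht', heq⟩ := exists_pow_dvd hR hP'.1 hd0 htP
    exact ⟨tt, n, a, t', ⟨htP, htQ⟩, ht', heq⟩
  choose tt nn aa tt' h1 h2 h3 using hch
  set s : R := ∏ P ∈ B.attach, tt P.1 P.2 ^ nn P.1 P.2 with hs
  have hsQ : s ∉ Q := by
    have hmem : s ∈ Q.primeCompl :=
      Submonoid.prod_mem _ (fun P _ => pow_mem (show tt P.1 P.2 ∈ Q.primeCompl from (h1 P.1 P.2).2) _)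
    exact hmem
  have hsP : ∀ P (hP : P ∈ B), ∃ a'' t'', t'' ∉ P ∧ s * t'' = d * a'' := by
    intro P hP
    have hfac := (Finset.mul_prod_erase B.attach (fun x => tt x.1 x.2 ^ nn x.1 x.2)
      (Finset.mem_attach B ⟨P, hP⟩)).symm
    refine ⟨aa P hP * ∏ x ∈ B.attach.erase ⟨P, hP⟩, tt x.1 x.2 ^ nn x.1 x.2, tt' P hP,
      h2 P hP, ?_⟩
    calc s * tt' P hP
        = (tt P hP ^ nn P hP * tt' P hP) * ∏ x ∈ B.attach.erase ⟨P, hP⟩,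
            tt x.1 x.2 ^ nn x.1 x.2 := by rw [hs, hfac]; ring
      _ = d * (aa P hP * ∏ x ∈ B.attach.erase ⟨P, hP⟩, tt x.1 x.2 ^ nn x.1 x.2) := by
          rw [h3 P hP]; ring
  have key : ∀ m, ∃ r : R, алг r = алг s * lam m := by
    intro m
    obtain ⟨rm, hrm⟩ := hd m
    obtain ⟨a1, t1, ht1, hxt⟩ := hlam2 m
    apply hR.2.1
    intro P hP
    by_cases hPQ : P = Q
    · subst hPQ
      refine ⟨s * a1, t1, ht1, ?_⟩
      rw [mul_assoc, hxt, ← map_mul]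
    · by_cases hdP : d ∈ P
      · have hPB : P ∈ B := Finset.mem_erase.mpr ⟨hPQ, hfin.mem_toFinset.mpr ⟨hP, hdP⟩⟩
        obtain ⟨a'', t'', ht'', hst⟩ := hsP P hPB
        refine ⟨a'' * rm, t'', ht'', ?_⟩
        calc алг s * lam m * алг t'' = алг (s * t'') * lam m := by rw [map_mul]; ring
          _ = алг a'' * (алг d * lam m) := by rw [hst, map_mul]; ring
          _ = алг (a'' * rm) := by rw [hrm, ← map_mul]
      · refine ⟨s * rm, d, hdP, ?_⟩
        calc алг s * lam m * алг d = алг s * (алг d * lam m) := by ring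
          _ = алг (s * rm) := by rw [hrm, ← map_mul]
  obtain ⟨ψ, hψ⟩ := exists_desc (s • lam) (by
    intro m
    obtain ⟨r, hr⟩ := key m
    exact ⟨r, by rw [LinearMap.smul_apply, Algebra.smul_def]; exact hr⟩)
  refine ⟨s, ψ, hsQ, ?_⟩
  apply LinearMap.ext
  intro l
  apply IsFractionRing.injective R (FractionRing R)
  rw [LinearMap.comp_apply, hψ (f l), LinearMap.smul_apply, Algebra.smul_def, hlam1 l,
    LinearMap.smul_apply, smul_eq_mul, map_mul]

end Aux


theorem stmt9 (R : Type u) (L M N : Type u) [CommRing R] [IsDomain R]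
    [AddCommGroup L] [Module R L] [AddCommGroup M] [Module R M] [AddCommGroup N] [Module R N]
    (hR : IsKrullDomain R) (hL : IsLattice R L) (hM : IsLattice R M) (hN : IsLattice R N)
    (f : L →ₗ[R] M) (g : M →ₗ[R] N)
    (hf : Function.Injective f) (hfg : Function.Exact f g) :
    Function.Injective (f.dualMap.dualMap) ∧
      Function.Exact (f.dualMap.dualMap) (g.dualMap.dualMap) := by
  have injK : Function.Injective (algebraMap R (FractionRing R)) :=
    IsFractionRing.injective R (FractionRing R)
  constructor
  · -- injectivity of the double dual of f
    have hker : ∀ Φ : Module.Dual R (Module.Dual R L), f.dualMap.dualMap Φ = 0 → Φ = 0 := by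
      intro Φ hΦ
      apply LinearMap.ext
      intro φ
      obtain ⟨d, ψ, hd0, hpair⟩ := exists_pair hM f hf φ
      have h1 : Φ (ψ.comp f) = 0 := by
        have := LinearMap.congr_fun hΦ ψ
        exact (by simpa using this : Φ (f.dualMap ψ) = 0)
      rw [hpair, map_smul, smul_eq_mul] at h1
      have h2 := (mul_eq_zero.mp h1).resolve_left hd0
      simpa using h2
    intro a b hab
    have h3 : f.dualMap.dualMap (a - b) = 0 := by rw [map_sub, hab, sub_self]
    exact sub_eq_zero.mp (hker _ h3)
  · intro Φ
    constructor
    · intro hΦ0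
      -- `Φ` kills every functional vanishing on `range f = ker g`
      have hvan : ∀ ψ : Module.Dual R M, ψ.comp f = 0 → Φ ψ = 0 := by
        intro ψ hψf
        refine vanish hN g Φ (fun χ => ?_) ψ (fun m hm => ?_)
        · have := LinearMap.congr_fun hΦ0 χ
          simpa using this
        · rw [LinearMap.mem_ker] at hm
          obtain ⟨l, hl⟩ := (hfg m).mp hm
          rw [LinearMap.mem_ker, ← hl]
          exact LinearMap.congr_fun hψf l
      have WD : ∀ (φ : Module.Dual R L) (s : R) (ψ : Module.Dual R M) (s' : R)
          (ψ' : Module.Dual R M), ψ.comp f = s • φ → ψ'.comp f = s' • φ →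
          s' * Φ ψ = s * Φ ψ' := by
        intro φ s ψ s' ψ' hp hp'
        have hz : ((s' • ψ) - (s • ψ')).comp f = 0 := by
          rw [LinearMap.sub_comp, LinearMap.smul_comp, LinearMap.smul_comp, hp, hp',
            smul_smul, smul_smul, mul_comm, sub_self]
        have h4 := hvan _ hz
        rw [map_sub, map_smul, map_smul, smul_eq_mul, smul_eq_mul, sub_eq_zero] at h4
        exact h4
      have hex : ∀ φ : Module.Dual R L,
          ∃ r : R, ∀ (s : R) (ψ : Module.Dual R M), s ≠ 0 → ψ.comp f = s • φ → r * s = Φ ψ := by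
        intro φ
        obtain ⟨s0, ψ0, hs00, hp0⟩ := exists_pair hM f hf φ
        have hs0K : algebraMap R (FractionRing R) s0 ≠ 0 :=
          fun h => hs00 (injK (by rw [h, map_zero]))
        obtain ⟨r, hr⟩ : ∃ r : R,
            algebraMap R (FractionRing R) r * algebraMap R (FractionRing R) s0
              = algebraMap R (FractionRing R) (Φ ψ0) := by
          obtain ⟨r, hr⟩ : ∃ r, algebraMap R (FractionRing R) r
              = algebraMap R (FractionRing R) (Φ ψ0) * (algebraMap R (FractionRing R) s0)⁻¹ := by
            apply hR.2.1
            intro P hP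
            obtain ⟨sP, ψP, hsPQ, hpP⟩ := exists_pair_avoiding hR hM hN f g hf hfg φ hP
            refine ⟨Φ ψP, sP, hsPQ, ?_⟩
            have hwd := WD φ s0 ψ0 sP ψP hp0 hpP
            have hc : algebraMap R (FractionRing R) (sP * Φ ψ0)
                = algebraMap R (FractionRing R) (s0 * Φ ψP) := congrArg _ hwd
            rw [map_mul, map_mul] at hc
            field_simp
            calc algebraMap R (FractionRing R) (Φ ψ0) * algebraMap R (FractionRing R) sP
                = algebraMap R (FractionRing R) sP * algebraMap R (FractionRing R) (Φ ψ0) :=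
                  mul_comm _ _
              _ = algebraMap R (FractionRing R) s0 * algebraMap R (FractionRing R) (Φ ψP) := hc
          refine ⟨r, ?_⟩
          rw [hr]
          field_simp
        refine ⟨r, ?_⟩
        intro s ψ hs0 hp
        have hwd := WD φ s0 ψ0 s ψ hp0 hp
        apply injK
        have h5 : algebraMap R (FractionRing R) (r * s) * algebraMap R (FractionRing R) s0
            = algebraMap R (FractionRing R) (Φ ψ) * algebraMap R (FractionRing R) s0 := by
          have hc : algebraMap R (FractionRing R) (s * Φ ψ0)
              = algebraMap R (FractionRing R) (s0 * Φ ψ) := congrArg _ hwd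
          rw [map_mul, map_mul] at hc
          rw [map_mul, mul_comm (algebraMap R (FractionRing R) r), mul_assoc, hr, hc, mul_comm]
        exact mul_right_cancel₀ hs0K h5
      choose rr hrr using hex
      have pairm : ∀ φ : Module.Dual R L, ∃ (s : R) (ψ : Module.Dual R M),
          s ≠ 0 ∧ ψ.comp f = s • φ := by
        intro φ
        obtain ⟨s, ψ, h1, h2⟩ := exists_pair hM f hf φ
        exact ⟨s, ψ, h1, h2⟩
      have hadd : ∀ φ φ', rr (φ + φ') = rr φ + rr φ' := by
        intro φ φ'
        obtain ⟨s, ψ, hs, hp⟩ := pairm φ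
        obtain ⟨s', ψ', hs', hp'⟩ := pairm φ'
        have hss' : s * s' ≠ 0 := mul_ne_zero hs hs'
        have hpp : ((s' • ψ) + (s • ψ')).comp f = (s * s') • (φ + φ') := by
          rw [LinearMap.add_comp, LinearMap.smul_comp, LinearMap.smul_comp, hp, hp',
            smul_smul, smul_smul, mul_comm s' s]
          exact (smul_add _ _ _).symm
        have e1 := hrr (φ + φ') (s * s') _ hss' hpp
        have e2 := hrr φ s ψ hs hp
        have e3 := hrr φ' s' ψ' hs' hp'
        have e4 : Φ ((s' • ψ) + (s • ψ')) = s' * Φ ψ + s * Φ ψ' := by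
          rw [map_add, map_smul, map_smul, smul_eq_mul, smul_eq_mul]
        have e5 : rr (φ + φ') * (s * s') = (rr φ + rr φ') * (s * s') := by
          rw [e1, e4, ← e2, ← e3]
          ring
        exact mul_right_cancel₀ hss' e5
      have hsmul : ∀ (c : R) (φ : Module.Dual R L), rr (c • φ) = c * rr φ := by
        intro c φ
        obtain ⟨s, ψ, hs, hp⟩ := pairm φ
        have hpc : (c • ψ).comp f = s • (c • φ) := by
          rw [LinearMap.smul_comp, hp, smul_comm]
        have e1 := hrr (c • φ) s (c • ψ) hs hpc
        have e2 := hrr φ s ψ hs hp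
        have e5 : rr (c • φ) * s = (c * rr φ) * s := by
          rw [e1, map_smul, smul_eq_mul, ← e2]
          ring
        exact mul_right_cancel₀ hs e5
      let Ψ : Module.Dual R (Module.Dual R L) :=
        { toFun := rr
          map_add' := hadd
          map_smul' := by
            intro c φ
            simpa [smul_eq_mul] using hsmul c φ }
      refine ⟨Ψ, ?_⟩
      apply LinearMap.ext
      intro ψ
      have e := hrr (ψ.comp f) 1 ψ one_ne_zero (by rw [one_smul])
      rw [mul_one] at e
      exact e
    · rintro ⟨Ψ, rfl⟩
      apply LinearMap.ext
      intro χ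
      have h7 : f.dualMap (g.dualMap χ) = 0 := by
        apply LinearMap.ext
        intro l
        have h8 : g (f l) = 0 := hfg.apply_apply_eq_zero l
        simp [h8]
      show Ψ (f.dualMap (g.dualMap χ)) = 0
      rw [h7, map_zero]
end

section
/- Let R be a Krull domain, M an R-module whose torsion-free quotient is a lattice, and N a reflexive R-module. Then Hom_R(M, N) is a reflexive R-module. -/
open TensorProduct

universe u

def IsReflexive (R : Type u) (M : Type u) [CommRing R] [AddCommGroup M] [Module R M] : Prop :=
  IsLattice R M ∧ Function.Bijective (Module.Dual.eval R M)


section Helpers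

open Submodule

variable {R : Type*} [CommRing R] [IsDomain R]

lemma aux_mk_injective {X : Type*} [AddCommGroup X] [Module R X] [NoZeroSMulDivisors R X] :
    Function.Injective (LocalizedModule.mkLinearMap (nonZeroDivisors R) X) := by
  rw [← LinearMap.ker_eq_bot]
  rw [LinearMap.ker_eq_bot']
  intro x hx
  have h' : LocalizedModule.mk x (1 : nonZeroDivisors R) =
      LocalizedModule.mk (0 : X) (1 : nonZeroDivisors R) := by
    simpa [LocalizedModule.zero_mk] using hx
  rw [LocalizedModule.mk_eq] at h'
  obtain ⟨u, hu⟩ := h'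
  have hu0 : (u : R) ≠ 0 := nonZeroDivisors.coe_ne_zero u
  exact (smul_eq_zero.mp (by simpa [Submonoid.smul_def] using hu)).resolve_left hu0

lemma aux_G {A V : Type*} [AddCommGroup A] [Module R A]
    [AddCommGroup V] [Module R V] [Module (FractionRing R) V]
    [IsScalarTower R (FractionRing R) V] [Module.Finite (FractionRing R) V]
    (ψ : A →ₗ[R] V) :
    ∃ (k : ℕ) (m : Fin k → A),
      LinearIndependent (FractionRing R) (fun i => ψ (m i)) ∧
      ∀ x : A, ∃ r ∈ nonZeroDivisors R, ∃ a : Fin k → R,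
        ψ (r • x) = ψ (∑ i, a i • m i) := by
  classical
  set K := FractionRing R with hK
  obtain ⟨b, hbsub, hbspan, hbind⟩ := exists_linearIndependent K (Set.range ψ)
  have hbfin : b.Finite := hbind.setFinite
  obtain ⟨k, v, hv⟩ := hbfin.fin_embedding
  have hvb : ∀ i, v i ∈ b := fun i => hv ▸ Set.mem_range_self i
  choose m hm using fun i => hbsub (hvb i)
  have hvind : LinearIndependent K (fun i => ψ (m i)) := by
    have h1 : LinearIndependent K (fun i : Fin k => ((⟨v i, hvb i⟩ : b) : V)) :=
      hbind.comp (fun i => (⟨v i, hvb i⟩ : b))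
        (fun i j hij => v.injective (congrArg Subtype.val hij))
    have : (fun i : Fin k => ψ (m i)) = fun i : Fin k => ((⟨v i, hvb i⟩ : b) : V) := by
      funext i; simp [hm]
    rw [this]; exact h1
  refine ⟨k, m, hvind, ?_⟩
  intro x
  have hx : ψ x ∈ span K (Set.range fun i => v i) := by
    have h1 : ψ x ∈ span K b := by
      rw [hbspan]; exact subset_span (Set.mem_range_self x)
    have h2 : Set.range (fun i => v i) = b := hv
    rw [h2]; exact h1
  obtain ⟨c, hc⟩ := (mem_span_range_iff_exists_fun K).mp hx
  obtain ⟨r, hr⟩ := IsLocalization.exist_integer_multiples_of_finite (nonZeroDivisors R) c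
  choose a ha using fun i => hr i
  refine ⟨(r : R), r.2, a, ?_⟩
  have key : ψ ((r : R) • x) = ∑ i, (algebraMap R K (a i)) • v i := by
    rw [map_smul]
    rw [← algebraMap_smul (A := K) (M := V) (r := (r : R)) (m := ψ x)]
    rw [← hc, Finset.smul_sum]
    refine Finset.sum_congr rfl fun i _ => ?_
    rw [smul_smul, ha i, Algebra.smul_def]
  rw [key, map_sum]
  refine Finset.sum_congr rfl fun i _ => ?_
  rw [map_smul, algebraMap_smul, hm i]

end Helpers
section Key

open Submodule

variable {R : Type*} [CommRing R] [IsDomain R]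

lemma aux_key {M N Q' : Type*} [AddCommGroup M] [Module R M] [AddCommGroup N] [Module R N]
    [AddCommGroup Q'] [Module R Q'] [Module.Finite R Q'] [NoZeroSMulDivisors R Q']
    (g' : N →ₗ[R] Q') (hg' : Function.Injective g')
    {k : ℕ} (m : Fin k → M)
    (hL1 : ∀ f : M →ₗ[R] N, (∀ i, f (m i) = 0) → f = 0)
    (ξ : Module.Dual R (M →ₗ[R] N)) :
    ∃ s ∈ nonZeroDivisors R, ∃ lam : Fin k → Module.Dual R N,
      ∀ f : M →ₗ[R] N, s * ξ f = ∑ i, lam i (f (m i)) := by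
  classical
  set K := FractionRing R with hK
  set S := nonZeroDivisors R with hS
  -- the target finite-dimensional vector space
  set W := (Fin k → Q') with hW
  set V := LocalizedModule S W with hV
  haveI : Module.Finite K V :=
    Module.Finite.of_isLocalizedModule S (Rₚ := K) (LocalizedModule.mkLinearMap S W)
  -- the evaluation map into W and V
  set ΘQ : (M →ₗ[R] N) →ₗ[R] W :=
    LinearMap.pi (fun i => g' ∘ₗ LinearMap.applyₗ (m i)) with hΘQ
  have hΘQinj : Function.Injective ΘQ := by
    rw [← LinearMap.ker_eq_bot, LinearMap.ker_eq_bot']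
    intro f hf
    refine hL1 f fun i => hg' ?_
    have : ΘQ f i = 0 := by rw [hf]; rfl
    rw [map_zero]; exact this
  set jH : (M →ₗ[R] N) →ₗ[R] V := (LocalizedModule.mkLinearMap S W) ∘ₗ ΘQ with hjH
  have hjHinj : Function.Injective jH := aux_mk_injective.comp hΘQinj
  obtain ⟨d, F, hFind, hFspan⟩ := aux_G jH
  have hFspan' : ∀ f : M →ₗ[R] N, ∃ r ∈ S, ∃ a : Fin d → R,
      r • f = ∑ l, a l • F l := by
    intro f
    obtain ⟨r, hr, a, ha⟩ := hFspan f
    exact ⟨r, hr, a, hjHinj ha⟩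
  -- build the K-functional ζ on V
  set sF : Set V := Set.range (fun l => jH (F l)) with hsF
  have hsub : LinearIndepOn K id sF := (linearIndepOn_id_range_iff hFind.injective).mpr hFind
  set basis := Module.Basis.extend hsub with hbasis
  have hFinj : Function.Injective (fun l => jH (F l)) := hFind.injective
  set gfun : LinearIndepOn.extend hsub (Set.subset_univ sF) → K :=
    fun x => if h : ∃ l, jH (F l) = (x : V) then algebraMap R K (ξ (F h.choose)) else 0
    with hgfun
  set ζ : V →ₗ[K] K := basis.constr ℕ gfun with hζ
  have hgval : ∀ (x : LinearIndepOn.extend hsub (Set.subset_univ sF)) (h : ∃ l, jH (F l) = (x : V)),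
      gfun x = algebraMap R K (ξ (F h.choose)) := by
    intro x h
    simp only [hgfun]
    rw [dif_pos h]
  have hζF : ∀ l, ζ (jH (F l)) = algebraMap R K (ξ (F l)) := by
    intro l
    have hmem : jH (F l) ∈ LinearIndepOn.extend hsub (Set.subset_univ sF) :=
      LinearIndepOn.subset_extend hsub _ ⟨l, rfl⟩
    have h1 : jH (F l) = basis ⟨jH (F l), hmem⟩ :=
      (Module.Basis.extend_apply_self hsub ⟨_, hmem⟩).symm
    have hex : ∃ l', jH (F l') = ((⟨jH (F l), hmem⟩ : LinearIndepOn.extend hsub (Set.subset_univ sF)) : V) :=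
      ⟨l, rfl⟩
    rw [h1, hζ, Module.Basis.constr_basis, hgval _ hex]
    have : hex.choose = l := hFinj hex.choose_spec
    rw [this]
  have hζall : ∀ f : M →ₗ[R] N, ζ (jH f) = algebraMap R K (ξ f) := by
    intro f
    obtain ⟨r, hr, a, ha⟩ := hFspan' f
    have hrne : algebraMap R K r ≠ 0 :=
      IsFractionRing.to_map_ne_zero_of_mem_nonZeroDivisors hr
    apply mul_left_cancel₀ hrne
    have lhs : algebraMap R K r * ζ (jH f) = ζ (jH (r • f)) := by
      rw [map_smul, ← algebraMap_smul (A := K) (M := V) (r := r), map_smul, smul_eq_mul]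
    have rhs : ∀ l, ζ (jH (a l • F l)) = algebraMap R K (a l * ξ (F l)) := by
      intro l
      rw [map_smul, ← algebraMap_smul (A := K) (M := V) (r := a l), map_smul, smul_eq_mul,
        hζF l, ← map_mul]
    have hsum : ∑ l, ζ (jH (a l • F l)) = algebraMap R K (∑ l, a l * ξ (F l)) := by
      rw [map_sum]
      exact Finset.sum_congr rfl fun l _ => rhs l
    rw [lhs, ha, map_sum, map_sum, hsum, ← map_mul]
    congr 1
    rw [show (r * ξ f : R) = ξ (r • f) by rw [map_smul, smul_eq_mul], ha, map_sum]
    exact Finset.sum_congr rfl fun l _ => by rw [map_smul, smul_eq_mul]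
  -- clearing denominators on generators
  obtain ⟨TQ, hTQ⟩ := Module.Finite.fg_top (R := R) (M := Q')
  set c : Fin k × TQ → K := fun p => ζ (LocalizedModule.mk (Pi.single p.1 (p.2 : Q')) 1)
    with hc
  obtain ⟨s, hs⟩ := IsLocalization.exist_integer_multiples_of_finite S c
  choose aInt haInt using fun p => hs p
  set T0 : W →ₗ[R] K := (s : R) • ((ζ.restrictScalars R) ∘ₗ LocalizedModule.mkLinearMap S W)
    with hT0
  have hT0range : ∀ w : W, T0 w ∈ LinearMap.range (Algebra.linearMap R K) := by
    have hGspan : span R (Set.range (fun p : Fin k × TQ => Pi.single p.1 (p.2 : Q') : _ → W)) = ⊤ := by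
      rw [eq_top_iff]
      intro w _
      rw [← Finset.univ_sum_single w]
      refine Submodule.sum_mem _ fun i _ => ?_
      have hwi : w i ∈ span R (TQ : Set Q') := by rw [hTQ]; trivial
      have hmap := Submodule.mem_map_of_mem
        (f := LinearMap.single R (fun _ : Fin k => Q') i) hwi
      rw [Submodule.map_span] at hmap
      refine Submodule.span_mono ?_ hmap
      rintro _ ⟨q, hq, rfl⟩
      exact ⟨(i, ⟨q, hq⟩), rfl⟩
    intro w
    have hw : w ∈ span R (Set.range (fun p : Fin k × TQ => Pi.single p.1 (p.2 : Q') : _ → W)) := by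
      rw [hGspan]; trivial
    have : span R (Set.range (fun p : Fin k × TQ => Pi.single p.1 (p.2 : Q') : _ → W)) ≤
        Submodule.comap T0 (LinearMap.range (Algebra.linearMap R K)) := by
      rw [Submodule.span_le]
      rintro _ ⟨p, rfl⟩
      simp only [Submodule.mem_comap]
      refine ⟨aInt p, ?_⟩
      have : T0 (Pi.single p.1 (p.2 : Q')) = (s : R) • c p := by
        rw [hT0]; rfl
      rw [this, ← haInt p]
      rfl
    exact this hw
  set eRK : R ≃ₗ[R] LinearMap.range (Algebra.linearMap R K) :=
    LinearEquiv.ofInjective (Algebra.linearMap R K)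
      (IsFractionRing.injective R K) with heRK
  set ξ'' : W →ₗ[R] R := (eRK.symm : LinearMap.range (Algebra.linearMap R K) →ₗ[R] R) ∘ₗ
    (T0.codRestrict (LinearMap.range (Algebra.linearMap R K)) hT0range) with hξ''
  have halg : ∀ w : W, algebraMap R K (ξ'' w) = T0 w := by
    intro w
    have h1 : eRK (ξ'' w) = ⟨T0 w, hT0range w⟩ := by
      rw [hξ'']
      exact eRK.apply_symm_apply _
    have h2 : ((eRK (ξ'' w)) : K) = algebraMap R K (ξ'' w) := by
      rw [heRK]; rfl
    rw [← h2, h1]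
  refine ⟨(s : R), s.2, fun i => ξ'' ∘ₗ (LinearMap.single R (fun _ : Fin k => Q') i) ∘ₗ g', ?_⟩
  intro f
  have hinj := IsFractionRing.injective R K
  apply hinj
  have step1 : T0 (ΘQ f) = algebraMap R K ((s : R) * ξ f) := by
    have h1 : T0 (ΘQ f) = (s : R) • ζ (jH f) := rfl
    rw [h1, hζall f, Algebra.smul_def, ← map_mul]
  have step2 : T0 (ΘQ f) = algebraMap R K (ξ'' (ΘQ f)) := (halg _).symm
  rw [← step1, step2]
  congr 1
  have hdecomp : ΘQ f = ∑ i, Pi.single i (g' (f (m i))) := by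
    rw [← Finset.univ_sum_single (ΘQ f)]
    rfl
  rw [hdecomp, map_sum]
  rfl

end Key
theorem stmt12 (R : Type u) (M N : Type u) [CommRing R] [IsDomain R]
    [AddCommGroup M] [Module R M] [AddCommGroup N] [Module R N]
    (hR : IsKrullDomain R)
    (hM : IsLattice R (M ⧸ Submodule.torsion R M))
    (hN : IsReflexive R N) :
    IsReflexive R (M →ₗ[R] N) := by
  classical
  obtain ⟨hNlat, hNe⟩ := hN
  obtain ⟨tfN, Q, iQ1, iQ2, iQ3, g, hg⟩ := hNlat
  obtain ⟨tfM, P, iP1, iP2, iP3, fM, hfM⟩ := hM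
  letI := iQ1; letI := iQ2; letI := iQ3
  letI := iP1; letI := iP2; letI := iP3
  haveI hNtf : NoZeroSMulDivisors R N := ⟨fun {a n} h => tfN a n h⟩
  haveI : Module.Finite (FractionRing R) (LocalizedModule (nonZeroDivisors R) P) :=
    Module.Finite.of_isLocalizedModule (nonZeroDivisors R) (Rₚ := FractionRing R)
      (LocalizedModule.mkLinearMap (nonZeroDivisors R) P)
  -- the localized map out of M
  set ψM : M →ₗ[R] LocalizedModule (nonZeroDivisors R) P :=
    (LocalizedModule.mkLinearMap (nonZeroDivisors R) P) ∘ₗ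
      (fM ∘ₗ (Submodule.torsion R M).mkQ) with hψM
  have hkerψ : ∀ x : M, ψM x = 0 → ∃ s ∈ nonZeroDivisors R, s • x = 0 := by
    intro x hx
    have h' : LocalizedModule.mk (fM ((Submodule.torsion R M).mkQ x)) (1 : nonZeroDivisors R)
        = LocalizedModule.mk (0 : P) (1 : nonZeroDivisors R) := by
      rw [LocalizedModule.zero_mk]; exact hx
    rw [LocalizedModule.mk_eq] at h'
    obtain ⟨u, hu⟩ := h'
    have hu' : fM ((u : R) • (Submodule.torsion R M).mkQ x) = fM 0 := by
      rw [map_smul, map_zero]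
      simpa [Submonoid.smul_def] using hu
    have h2 : (u : R) • (Submodule.torsion R M).mkQ x = 0 := hfM hu'
    have h3 : (Submodule.torsion R M).mkQ ((u : R) • x) = 0 := by rw [map_smul]; exact h2
    have h4 : (u : R) • x ∈ Submodule.torsion R M := by
      rwa [Submodule.mkQ_apply, Submodule.Quotient.mk_eq_zero] at h3
    obtain ⟨u', hu'2⟩ := (Submodule.mem_torsion_iff _).mp h4
    refine ⟨(u' : R) * (u : R), mul_mem u'.2 u.2, ?_⟩
    rw [mul_smul]
    simpa [Submonoid.smul_def] using hu'2
  obtain ⟨k, m, -, hL1⟩ := aux_G ψM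
  have hL1' : ∀ x : M, ∃ r ∈ nonZeroDivisors R, ∃ a : Fin k → R,
      r • x = ∑ i, a i • m i := by
    intro x
    obtain ⟨r, hr, a, ha⟩ := hL1 x
    have hz : ψM (r • x - ∑ i, a i • m i) = 0 := by rw [map_sub, ha, sub_self]
    obtain ⟨u, hu, hux⟩ := hkerψ _ hz
    rw [smul_sub] at hux
    have h5 : u • (r • x) = u • ∑ i, a i • m i := sub_eq_zero.mp hux
    refine ⟨u * r, mul_mem hu hr, fun i => u * a i, ?_⟩
    rw [mul_smul, h5, Finset.smul_sum]
    exact Finset.sum_congr rfl fun i _ => (mul_smul u (a i) (m i)).symm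
  have hL1f : ∀ f : M →ₗ[R] N, (∀ i, f (m i) = 0) → f = 0 := by
    intro f hf
    ext x
    obtain ⟨r, hr, a, ha⟩ := hL1' x
    have hfx : r • f x = 0 := by
      rw [← map_smul, ha, map_sum]
      simp [hf]
    rcases tfN r (f x) hfx with h | h
    · exact absurd h (mem_nonZeroDivisors_iff_ne_zero.mp hr)
    · simpa using h
  constructor
  · -- IsLattice
    constructor
    · intro a f hf
      by_cases ha : a = 0
      · exact Or.inl ha
      · refine Or.inr ?_
        ext x
        have hax : a • f x = 0 := by rw [← LinearMap.smul_apply, hf]; rfl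
        rcases tfN a (f x) hax with h | h
        · exact absurd h ha
        · simpa using h
    · refine ⟨Fin k → Q, inferInstance, inferInstance, inferInstance,
        LinearMap.pi (fun i => g ∘ₗ LinearMap.applyₗ (m i)), ?_⟩
      rw [← LinearMap.ker_eq_bot, LinearMap.ker_eq_bot']
      intro f hf
      refine hL1f f fun i => hg ?_
      rw [map_zero]
      have : (LinearMap.pi (fun i => g ∘ₗ LinearMap.applyₗ (m i)) : (M →ₗ[R] N) →ₗ[R] _) f i
          = 0 := by rw [hf]; rfl
      simpa using this
  · -- Bijectivity of eval
    have hg'inj : Function.Injective ((Submodule.torsion R Q).mkQ ∘ₗ g) := by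
      rw [← LinearMap.ker_eq_bot, LinearMap.ker_eq_bot']
      intro n hn
      have h1 : g n ∈ Submodule.torsion R Q := by
        have : (Submodule.torsion R Q).mkQ (g n) = 0 := hn
        rwa [Submodule.mkQ_apply, Submodule.Quotient.mk_eq_zero] at this
      obtain ⟨u, hu⟩ := (Submodule.mem_torsion_iff _).mp h1
      have h2 : (u : R) • n = 0 := hg (by
        rw [map_smul, map_zero]
        simpa [Submonoid.smul_def] using hu)
      rcases tfN u n h2 with h | h
      · exact absurd h (nonZeroDivisors.coe_ne_zero u)
      · exact h
    set e : N ≃ₗ[R] Module.Dual R (Module.Dual R N) :=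
      LinearEquiv.ofBijective (Module.Dual.eval R N) hNe with he
    constructor
    · -- injective
      have hker : ∀ f : M →ₗ[R] N, Module.Dual.eval R (M →ₗ[R] N) f = 0 → f = 0 := by
        intro f hf
        ext x
        have hx : ∀ lam : Module.Dual R N, lam (f x) = 0 := by
          intro lam
          have h0 : (lam ∘ₗ LinearMap.applyₗ (R := R) x) f = 0 := by
            have : (Module.Dual.eval R (M →ₗ[R] N) f) (lam ∘ₗ LinearMap.applyₗ (R := R) x)
                = 0 := by rw [hf]; rfl
            exact this
          simpa using h0
        have hevz : Module.Dual.eval R N (f x) = Module.Dual.eval R N 0 := by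
          rw [map_zero]; ext lam; simpa using hx lam
        simpa using hNe.1 hevz
      intro f₁ f₂ h12
      have : f₁ - f₂ = 0 := hker _ (by rw [map_sub, h12, sub_self])
      exact sub_eq_zero.mp this
    · -- surjective
      intro Φ
      set compα : M →ₗ[R] (Module.Dual R N →ₗ[R] Module.Dual R (M →ₗ[R] N)) :=
        ((LinearMap.llcomp R (M →ₗ[R] N) N R).flip).comp (LinearMap.applyₗ (R := R)) with hcompα
      set Φcomp : M →ₗ[R] Module.Dual R (Module.Dual R N) :=
        (LinearMap.llcomp R (Module.Dual R N) (Module.Dual R (M →ₗ[R] N)) R Φ).comp compα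
        with hΦcomp
      set h : M →ₗ[R] N := e.symm.toLinearMap ∘ₗ Φcomp with hh
      have hkey1 : ∀ (x : M) (lam : Module.Dual R N),
          lam (h x) = Φ (lam ∘ₗ LinearMap.applyₗ (R := R) x) := by
        intro x lam
        have h1 : Module.Dual.eval R N (h x) = Φcomp x := by
          show Module.Dual.eval R N (e.symm (Φcomp x)) = Φcomp x
          have h2 : Module.Dual.eval R N (e.symm (Φcomp x)) = e (e.symm (Φcomp x)) := rfl
          rw [h2, e.apply_symm_apply]
        have h3 : lam (h x) = (Module.Dual.eval R N (h x)) lam := rfl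
        rw [h3, h1]
        rfl
      refine ⟨h, ?_⟩
      ext ξ
      haveI : NoZeroSMulDivisors R (Q ⧸ Submodule.torsion R Q) :=
        ⟨fun {a x} h => Module.isTorsionFree_iff_smul_eq_zero.mp inferInstance a x h⟩
      obtain ⟨s, hs, lam, hlam⟩ := aux_key ((Submodule.torsion R Q).mkQ ∘ₗ g) hg'inj m hL1f ξ
      have hsxi : s • ξ = ∑ i, (lam i) ∘ₗ LinearMap.applyₗ (R := R) (m i) := by
        ext f
        rw [LinearMap.smul_apply, smul_eq_mul, hlam f, LinearMap.sum_apply]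
        rfl
      have hs0 : s ≠ 0 := mem_nonZeroDivisors_iff_ne_zero.mp hs
      apply mul_left_cancel₀ hs0
      calc s * (Module.Dual.eval R (M →ₗ[R] N) h) ξ
          = (s • ξ) h := by rw [LinearMap.smul_apply, smul_eq_mul]; rfl
        _ = ∑ i, (lam i) (h (m i)) := by
            rw [hsxi, LinearMap.sum_apply]
            rfl
        _ = ∑ i, Φ ((lam i) ∘ₗ LinearMap.applyₗ (R := R) (m i)) :=
            Finset.sum_congr rfl fun i _ => hkey1 (m i) (lam i)
        _ = Φ (s • ξ) := by rw [hsxi, map_sum]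
        _ = s * Φ ξ := by rw [map_smul, smul_eq_mul]
end

section
/- Let R be a Krull domain, and M, N R-modules whose torsion-free quotients are lattices. Then the canonical map (M ⊗_R N)** → (M** ⊗_R N)** is an isomorphism. -/
open TensorProduct

universe u

private lemma dual_torsion_eq_zero {R M : Type u} [CommRing R] [IsDomain R] [AddCommGroup M]
    [Module R M] (f : Module.Dual R M) {x : M} (hx : x ∈ Submodule.torsion R M) : f x = 0 := by
  obtain ⟨s, hs⟩ := (Submodule.mem_torsion_iff x).mp hx
  have h1 : (s : R) * f x = 0 := by
    rw [← smul_eq_mul, ← map_smul, ← Submonoid.smul_def, hs, map_zero]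
  rcases mul_eq_zero.mp h1 with h | h
  · exact absurd h (nonZeroDivisors.coe_ne_zero s)
  · exact h

private lemma exists_smul_eq_eval {R M : Type u} [CommRing R] [IsDomain R] [AddCommGroup M]
    [Module R M] (hM : IsLattice R (M ⧸ Submodule.torsion R M))
    (ξ : Module.Dual R (Module.Dual R M)) :
    ∃ s : R, s ≠ 0 ∧ ∃ x : M, Module.Dual.eval R M x = s • ξ := by
  classical
  obtain ⟨-, P, _, _, _, fP, hfP⟩ := hM
  let ψ : M →ₗ[R] LocalizedModule (nonZeroDivisors R) P :=
    (LocalizedModule.mkLinearMap (nonZeroDivisors R) P) ∘ₗ fP ∘ₗ (Submodule.torsion R M).mkQ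
  have hker : ∀ x : M, ψ x = 0 → ∀ f : Module.Dual R M, f x = 0 := by
    intro x hx f
    obtain ⟨s, hs⟩ := (IsLocalizedModule.eq_zero_iff (nonZeroDivisors R)
      (LocalizedModule.mkLinearMap (nonZeroDivisors R) P)).mp hx
    rw [LinearMap.comp_apply] at hs
    have h2 : fP ((s : R) • (Submodule.torsion R M).mkQ x) = 0 := by
      rw [map_smul, ← Submonoid.smul_def, hs]
    have h3 : (Submodule.torsion R M).mkQ ((s : R) • x) = 0 := by
      apply hfP
      rw [map_zero, map_smul, h2]
    have h4 : (s : R) • x ∈ Submodule.torsion R M := by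
      rwa [Submodule.mkQ_apply, Submodule.Quotient.mk_eq_zero] at h3
    have h5 := dual_torsion_eq_zero f h4
    rw [map_smul, smul_eq_mul] at h5
    rcases mul_eq_zero.mp h5 with h | h
    · exact absurd h (nonZeroDivisors.coe_ne_zero s)
    · exact h
  haveI : Module.Finite (FractionRing R) (LocalizedModule (nonZeroDivisors R) P) :=
    Module.Finite.of_isLocalizedModule (nonZeroDivisors R)
      (LocalizedModule.mkLinearMap (nonZeroDivisors R) P)
  obtain ⟨b, hbsub, hbspan, hbli⟩ := exists_linearIndependent (FractionRing R) (Set.range ψ)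
  haveI : Finite b := hbli.finite
  haveI : Fintype b := Fintype.ofFinite _
  choose mfun hmfun using fun (y : b) => Set.mem_range.mp (hbsub y.2)
  have key1 : ∀ x : M, ∃ s : R, s ≠ 0 ∧ ∃ a : b → R,
      ∀ f : Module.Dual R M, s * f x = ∑ y : b, a y * f (mfun y) := by
    intro x
    have hx : ψ x ∈ Submodule.span (FractionRing R)
        (Set.range ((↑) : b → LocalizedModule (nonZeroDivisors R) P)) := by
      rw [Subtype.range_coe, hbspan]
      exact Submodule.subset_span (Set.mem_range_self x)
    obtain ⟨c, hc⟩ := (Submodule.mem_span_range_iff_exists_fun _).mp hx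
    obtain ⟨s, hs⟩ := IsLocalization.exist_integer_multiples_of_finite (nonZeroDivisors R)
      (S := FractionRing R) c
    have hs' : ∀ y : b, ∃ r : R, algebraMap R (FractionRing R) r = (s : R) • c y := fun y => hs y
    choose a ha using hs'
    refine ⟨s, nonZeroDivisors.coe_ne_zero s, a, ?_⟩
    intro f
    have h0 : ψ ((s : R) • x - ∑ y : b, a y • mfun y) = 0 := by
      rw [map_sub, map_smul, map_sum]
      simp_rw [map_smul, hmfun]
      rw [← hc, Finset.smul_sum, sub_eq_zero]
      refine Finset.sum_congr rfl fun y _ => ?_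
      rw [← smul_assoc, ← ha y, algebraMap_smul]
    have h1 := hker _ h0 f
    rw [map_sub, map_smul, map_sum, sub_eq_zero, smul_eq_mul] at h1
    simpa [map_smul, smul_eq_mul] using h1
  have hΦinj : ∀ f g : Module.Dual R M, (∀ y : b, f (mfun y) = g (mfun y)) → f = g := by
    intro f g h
    ext x
    obtain ⟨s, hs0, a, ha⟩ := key1 x
    have h2 : s * f x = s * g x := by
      rw [ha f, ha g]
      exact Finset.sum_congr rfl fun y _ => by rw [h y]
    exact mul_left_cancel₀ hs0 h2
  let K := FractionRing R
  let Φ : Module.Dual R M → (b → FractionRing R) :=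
    fun f y => algebraMap R (FractionRing R) (f (mfun y))
  have halginj : Function.Injective (algebraMap R (FractionRing R)) :=
    IsFractionRing.injective R (FractionRing R)
  have hΦinj' : Function.Injective Φ := by
    intro f g h
    exact hΦinj f g fun y => halginj (congrFun h y)
  obtain ⟨b', hb'sub, hb'span, hb'li⟩ := exists_linearIndependent (FractionRing R) (Set.range Φ)
  let B := Module.Basis.extend hb'li
  let val : (b → FractionRing R) → FractionRing R := fun w =>
    if h : w ∈ Set.range Φ then algebraMap R (FractionRing R) (ξ h.choose) else 0
  have hval : ∀ (f : Module.Dual R M) (w : b → FractionRing R), Φ f = w →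
      val w = algebraMap R (FractionRing R) (ξ f) := by
    intro f w hw
    have h : w ∈ Set.range Φ := ⟨f, hw⟩
    have h1 : val w = algebraMap R (FractionRing R) (ξ h.choose) := dif_pos h
    rw [h1]
    congr 1
    have hc := h.choose_spec
    have h2 : h.choose = f := hΦinj' (hc.trans hw.symm)
    rw [h2]
  let lam : (b → FractionRing R) →ₗ[FractionRing R] FractionRing R :=
    B.constr (FractionRing R) (fun i => val (i : b → FractionRing R))
  have hlamb' : ∀ w ∈ b', lam w = val w := by
    intro w hw
    have hw2 : w ∈ LinearIndepOn.extend (show LinearIndepOn (FractionRing R) id b' from hb'li) (Set.subset_univ b') :=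
      LinearIndepOn.subset_extend (show LinearIndepOn (FractionRing R) id b' from hb'li) _ hw
    have h3 := B.constr_basis (FractionRing R) (fun i => val ((i : ↑b → FractionRing R))) ⟨w, hw2⟩
    rw [show B ⟨w, hw2⟩ = w from Module.Basis.extend_apply_self _ _] at h3
    exact h3
  have claimA : ∀ f : Module.Dual R M, lam (Φ f) = algebraMap R (FractionRing R) (ξ f) := by
    intro f
    have h1 : Φ f ∈ Submodule.span (FractionRing R) b' := by
      rw [hb'span]; exact Submodule.subset_span ⟨f, rfl⟩
    obtain ⟨c, hcsupp, hcsum⟩ := Submodule.mem_span_set.mp h1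
    obtain ⟨s, hs⟩ := IsLocalization.exist_integer_multiples (nonZeroDivisors R) c.support c
    have hs2 : ∀ w ∈ c.support, ∃ r : R, algebraMap R (FractionRing R) r = (s : R) • c w :=
      fun w hw => hs w hw
    choose! a ha using hs2
    have hg2 : ∀ w ∈ c.support, ∃ f0 : Module.Dual R M, Φ f0 = w :=
      fun w hw => Set.mem_range.mp (hb'sub (hcsupp hw))
    choose! g hg using hg2
    have step1 : (s : R) • f = ∑ w ∈ c.support, a w • g w := by
      apply hΦinj
      intro y
      apply halginj
      show algebraMap R (FractionRing R) (((s : R) • f) (mfun y))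
        = algebraMap R (FractionRing R) ((∑ w ∈ c.support, a w • g w) (mfun y))
      have lhs1 : ((s : R) • f) (mfun y) = (s : R) * f (mfun y) := rfl
      have rhs1 : (∑ w ∈ c.support, a w • g w) (mfun y)
          = ∑ w ∈ c.support, a w * (g w) (mfun y) := by
        rw [LinearMap.sum_apply]
        simp [smul_eq_mul]
      rw [lhs1, rhs1, map_mul, map_sum]
      have hΦfy : algebraMap R (FractionRing R) (f (mfun y)) = ∑ w ∈ c.support, c w * w y := by
        have h4 : (c.sum fun mi r => r • mi) y = Φ f y := congrFun hcsum y
        rw [Finsupp.sum, Finset.sum_apply] at h4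
        simp only [Pi.smul_apply, smul_eq_mul] at h4
        exact h4.symm
      rw [hΦfy, Finset.mul_sum]
      refine Finset.sum_congr rfl fun w hw => ?_
      rw [map_mul, ha w hw, Algebra.smul_def]
      have h5 : (w : b → FractionRing R) y = algebraMap R (FractionRing R) ((g w) (mfun y)) :=
        (congrFun (hg w hw) y).symm
      rw [h5]
      ring
    have step2 : (s : R) * ξ f = ∑ w ∈ c.support, a w * ξ (g w) := by
      have h6 := congrArg ξ step1
      rw [map_smul, smul_eq_mul, map_sum] at h6
      simpa [smul_eq_mul] using h6
    have hsne : algebraMap R (FractionRing R) (s : R) ≠ 0 := by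
      intro h
      exact nonZeroDivisors.coe_ne_zero s (halginj (by rw [h, map_zero]))
    apply mul_left_cancel₀ hsne
    have step3 : algebraMap R (FractionRing R) (s : R) * lam (Φ f)
        = ∑ w ∈ c.support, algebraMap R (FractionRing R) (a w) * lam w := by
      rw [← hcsum, Finsupp.sum, map_sum, Finset.mul_sum]
      refine Finset.sum_congr rfl fun w hw => ?_
      rw [map_smul, smul_eq_mul, ha w hw, Algebra.smul_def]
      ring
    rw [step3]
    have step4 : ∀ w ∈ c.support, lam w = algebraMap R (FractionRing R) (ξ (g w)) := by
      intro w hw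
      rw [hlamb' w (hcsupp hw)]
      exact hval (g w) w (hg w hw)
    calc ∑ w ∈ c.support, algebraMap R (FractionRing R) (a w) * lam w
        = ∑ w ∈ c.support, algebraMap R (FractionRing R) (a w * ξ (g w)) := by
          refine Finset.sum_congr rfl fun w hw => ?_
          rw [step4 w hw, map_mul]
      _ = algebraMap R (FractionRing R) (∑ w ∈ c.support, a w * ξ (g w)) := (map_sum _ _ _).symm
      _ = algebraMap R (FractionRing R) ((s : R) * ξ f) := by rw [← step2]
      _ = algebraMap R (FractionRing R) (s : R) * algebraMap R (FractionRing R) (ξ f) := map_mul _ _ _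
  -- coordinates
  have coord : ∀ w : b → FractionRing R, lam w = ∑ y : b, w y * lam ((Pi.single y 1 : ↑b → FractionRing R)) := by
    intro w
    conv_lhs => rw [← Finset.univ_sum_single w]
    rw [map_sum]
    refine Finset.sum_congr rfl fun y _ => ?_
    have h7 : Pi.single y (w y) = w y • (Pi.single y 1 : ↑b → FractionRing R) := by
      rw [← Pi.single_smul, smul_eq_mul, mul_one]
    rw [h7, map_smul, smul_eq_mul]
  obtain ⟨s₁, hs₁⟩ := IsLocalization.exist_integer_multiples_of_finite (nonZeroDivisors R)
    (S := FractionRing R) (fun y : b => lam ((Pi.single y 1 : ↑b → FractionRing R)))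
  have hs₁2 : ∀ y : b, ∃ r : R, algebraMap R (FractionRing R) r = (s₁ : R) • lam ((Pi.single y 1 : ↑b → FractionRing R)) :=
    fun y => hs₁ y
  choose a₁ ha₁ using hs₁2
  refine ⟨s₁, nonZeroDivisors.coe_ne_zero s₁, ∑ y : b, a₁ y • mfun y, ?_⟩
  ext f
  show f (∑ y : b, a₁ y • mfun y) = ((s₁ : R) • ξ) f
  apply halginj
  rw [map_sum, map_sum]
  have lhs2 : ∀ y : b, algebraMap R (FractionRing R) (f (a₁ y • mfun y))
      = algebraMap R (FractionRing R) (f (mfun y)) * ((s₁ : R) • lam ((Pi.single y 1 : ↑b → FractionRing R))) := by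
    intro y
    rw [map_smul, smul_eq_mul, map_mul, ← ha₁ y]
    ring
  simp_rw [lhs2]
  have rhs2 : ((s₁ : R) • ξ) f = (s₁ : R) * ξ f := rfl
  rw [rhs2, map_mul]
  have h10 : ∀ y : b, algebraMap R (FractionRing R) (f (mfun y)) * ((s₁ : R) • lam ((Pi.single y 1 : ↑b → FractionRing R)))
      = algebraMap R (FractionRing R) (s₁ : R) * (Φ f y * lam ((Pi.single y 1 : ↑b → FractionRing R))) := by
    intro y
    rw [Algebra.smul_def]
    show _ * _ = _ * ((algebraMap R (FractionRing R)) (f (mfun y)) * _)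
    ring
  rw [Finset.sum_congr rfl (fun y _ => h10 y), ← Finset.mul_sum, ← coord (Φ f), claimA f]

private lemma eval_dualMap_bijective {R M : Type u} [CommRing R] [IsDomain R] [AddCommGroup M]
    [Module R M] (hM : IsLattice R (M ⧸ Submodule.torsion R M)) :
    Function.Bijective (Module.Dual.eval R M).dualMap := by
  constructor
  · intro φ₁ φ₂ h
    ext ξ
    obtain ⟨s, hs0, x, hx⟩ := exists_smul_eq_eval hM ξ
    have h1 : φ₁ (s • ξ) = φ₂ (s • ξ) := by
      rw [← hx]
      exact congrArg (fun ψ => ψ x) h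
    rw [map_smul, map_smul, smul_eq_mul, smul_eq_mul] at h1
    exact mul_left_cancel₀ hs0 h1
  · intro f
    refine ⟨Module.Dual.eval R (Module.Dual R M) f, ?_⟩
    ext m
    simp [LinearMap.dualMap_apply, Module.Dual.eval_apply]

private lemma dualMap_bijective_of_bijective {R A B : Type u} [CommRing R] [AddCommGroup A]
    [Module R A] [AddCommGroup B] [Module R B] {f : A →ₗ[R] B} (hf : Function.Bijective f) :
    Function.Bijective f.dualMap := by
  let e := LinearEquiv.ofBijective f hf
  have h : f.dualMap = (e.dualMap : Module.Dual R B →ₗ[R] Module.Dual R A) := by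
    ext φ a
    rfl
  rw [h]
  exact e.dualMap.bijective

theorem stmt13 (R : Type u) (M N : Type u) [CommRing R] [IsDomain R]
    [AddCommGroup M] [Module R M] [AddCommGroup N] [Module R N]
    (hR : IsKrullDomain R)
    (hM : IsLattice R (M ⧸ Submodule.torsion R M))
    (hN : IsLattice R (N ⧸ Submodule.torsion R N)) :
    Function.Bijective
      (((LinearMap.rTensor N (Module.Dual.eval R M)).dualMap).dualMap) := by
  classical
  have hd : Function.Bijective (Module.Dual.eval R M).dualMap := eval_dualMap_bijective hM
  set d := (Module.Dual.eval R M).dualMap with hd_def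
  let e := LinearEquiv.ofBijective d hd
  set g := LinearMap.rTensor N (Module.Dual.eval R M) with hg_def
  have hgd : Function.Bijective g.dualMap := by
    rw [Function.bijective_iff_has_inverse]
    refine ⟨fun ψ => TensorProduct.lift
      ((e.symm.toLinearMap ∘ₗ (TensorProduct.curry ψ).flip).flip), ?_, ?_⟩
    · -- left inverse
      intro ψ'
      apply TensorProduct.ext'
      intro ξ n
      show (e.symm ((TensorProduct.curry (g.dualMap ψ')).flip n)) ξ = ψ' (ξ ⊗ₜ n)
      have hX : (TensorProduct.curry (g.dualMap ψ')).flip n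
          = d ((TensorProduct.curry ψ').flip n) := by
        ext m
        show (g.dualMap ψ') (m ⊗ₜ n) = ((TensorProduct.curry ψ').flip n) ((Module.Dual.eval R M) m)
        rw [LinearMap.dualMap_apply, hg_def, LinearMap.rTensor_tmul]
        rfl
      rw [hX]
      have h2 : e.symm (d ((TensorProduct.curry ψ').flip n))
          = (TensorProduct.curry ψ').flip n := e.symm_apply_apply _
      rw [h2]
      rfl
    · -- right inverse
      intro ψ
      apply TensorProduct.ext'
      intro m n
      show (TensorProduct.lift ((e.symm.toLinearMap ∘ₗ (TensorProduct.curry ψ).flip).flip))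
        (g (m ⊗ₜ n)) = ψ (m ⊗ₜ n)
      rw [hg_def, LinearMap.rTensor_tmul]
      show (e.symm ((TensorProduct.curry ψ).flip n)) ((Module.Dual.eval R M) m) = ψ (m ⊗ₜ n)
      have h3 : (e.symm ((TensorProduct.curry ψ).flip n)) ((Module.Dual.eval R M) m)
          = (d (e.symm ((TensorProduct.curry ψ).flip n))) m := rfl
      rw [h3]
      have h4 : d (e.symm ((TensorProduct.curry ψ).flip n)) = (TensorProduct.curry ψ).flip n :=
        e.apply_symm_apply _
      rw [h4]
      rfl
  exact dualMap_bijective_of_bijective hgd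
end
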